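/- Define μ1(ℓ) = sup_{x, x* ≥ 0} (ℓ(x) − ℓ(x*))·x* / (ℓ(x)·x) over points where the denominator is positive. For the class of strictly increasing polynomials with nonnegative coefficients and degree at most d, μ1 ≤ d/(d+1)^((d+1)/d). -/

import Mathlib

open Real

lemma key_ineq (d : ℕ) (hd : 1 ≤ d) {t : ℝ} (ht0 : 0 ≤ t) (ht1 : t ≤ 1) :
    t - t ^ (d + 1) ≤ (d : ℝ) / (((d : ℝ) + 1) ^ (((d : ℝ) + 1) / (d : ℝ))) := by
  set D : ℝ := (d : ℝ) with hDdef
  have hD : (1 : ℝ) ≤ D := Nat.one_le_cast.mpr hd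
  have hD0 : (0 : ℝ) < D := by linarith
  have hD1 : (0 : ℝ) < D + 1 := by linarith
  set s : ℝ := (D + 1) ^ (-(1 / D)) with hsdef
  have hs : 0 < s := Real.rpow_pos_of_pos hD1 _
  have hsd : s ^ d = (D + 1)⁻¹ := by
    rw [hsdef, ← Real.rpow_natCast ((D+1) ^ (-(1/D))) d, ← Real.rpow_mul hD1.le]
    have : -(1 / D) * (d : ℝ) = -1 := by field_simp; rfl
    rw [this, Real.rpow_neg_one]
  have hsd1 : D * s ^ (d + 1) = D / ((D + 1) ^ ((D + 1) / D)) := by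
    rw [hsdef, ← Real.rpow_natCast ((D+1) ^ (-(1/D))) (d+1), ← Real.rpow_mul hD1.le]
    have h1 : -(1 / D) * ((d : ℝ) + 1) = -((D + 1) / D) := by field_simp; rfl
    push_cast
    rw [h1, Real.rpow_neg hD1.le]
    simp [div_eq_mul_inv]
  -- AM-GM
  have hw : 1 / (D + 1) + D / (D + 1) = 1 := by field_simp; ring
  have hgm := Real.geom_mean_le_arith_mean2_weighted
    (by positivity : (0:ℝ) ≤ 1 / (D + 1)) (by positivity : (0:ℝ) ≤ D / (D + 1))
    (by positivity : (0:ℝ) ≤ t ^ (d + 1)) (by positivity : (0:ℝ) ≤ s ^ (d + 1)) hw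
  have h1 : (t ^ (d + 1)) ^ (1 / (D + 1)) = t := by
    rw [← Real.rpow_natCast t (d + 1), ← Real.rpow_mul ht0]
    push_cast
    rw [show (D + 1) * (1 / (D + 1)) = 1 by field_simp, Real.rpow_one]
  have h2 : (s ^ (d + 1)) ^ (D / (D + 1)) = s ^ d := by
    rw [← Real.rpow_natCast s (d + 1), ← Real.rpow_mul hs.le]
    push_cast
    rw [show (D + 1) * (D / (D + 1)) = D by field_simp, ← Real.rpow_natCast s d]
  rw [h1, h2, hsd] at hgm
  -- hgm : t * (D+1)⁻¹ ≤ 1/(D+1) * t^(d+1) + D/(D+1) * s^(d+1)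
  rw [← hsd1]
  have := mul_le_mul_of_nonneg_left hgm hD1.le
  have hne : D + 1 ≠ 0 := ne_of_gt hD1
  calc t - t ^ (d + 1) = (D + 1) * (t * (D + 1)⁻¹) - t ^ (d + 1) := by
        field_simp
    _ ≤ (D + 1) * (1 / (D + 1) * t ^ (d + 1) + D / (D + 1) * s ^ (d + 1)) - t ^ (d + 1) := by
        linarith
    _ = D * s ^ (d + 1) := by field_simp; ring

lemma mono_term (d k : ℕ) (hd : 1 ≤ d) (hk : k ≤ d) {x xs : ℝ} (hx : 0 < x)
    (hxs0 : 0 ≤ xs) (hxs : xs ≤ x) :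
    (x ^ k - xs ^ k) * xs ≤ ((d : ℝ) / (((d : ℝ) + 1) ^ (((d : ℝ) + 1) / (d : ℝ)))) * (x ^ k * x) := by
  set t : ℝ := xs / x with htdef
  have ht0 : 0 ≤ t := div_nonneg hxs0 hx.le
  have ht1 : t ≤ 1 := (div_le_one hx).mpr hxs
  have hxst : xs = t * x := by rw [htdef, div_mul_cancel₀ _ hx.ne']
  have hpow : t ^ (d + 1) ≤ t ^ (k + 1) :=
    pow_le_pow_of_le_one ht0 ht1 (by omega)
  have hkey := key_ineq d hd ht0 ht1
  have h0 : t - t ^ (k + 1) ≤ (d : ℝ) / (((d : ℝ) + 1) ^ (((d : ℝ) + 1) / (d : ℝ))) := by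
    linarith
  calc (x ^ k - xs ^ k) * xs = x ^ (k + 1) * (t - t ^ (k + 1)) := by
        rw [hxst]; ring
    _ ≤ x ^ (k + 1) * ((d : ℝ) / (((d : ℝ) + 1) ^ (((d : ℝ) + 1) / (d : ℝ)))) := by
        apply mul_le_mul_of_nonneg_left h0 (by positivity)
    _ = ((d : ℝ) / (((d : ℝ) + 1) ^ (((d : ℝ) + 1) / (d : ℝ)))) * (x ^ k * x) := by ring

open Polynomial

/-- For ℓ a strictly increasing polynomial with nonnegative
coefficients and degree at most d (d ≥ 1), the smoothness parameter
μ₁(ℓ) = sup (ℓ(x) − ℓ(x*))·x* / (ℓ(x)·x) is at most d/(d+1)^((d+1)/d). -/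
theorem mu1_bound_polynomials
    (d : ℕ) (hd : 1 ≤ d) (p : Polynomial ℝ)
    (hcoeff : ∀ k, 0 ≤ p.coeff k)
    (hdeg : p.natDegree ≤ d)
    (hmono : StrictMonoOn (fun x => p.eval x) (Set.Ici (0 : ℝ))) :
    ∀ x xs : ℝ, 0 ≤ x → 0 ≤ xs → 0 < p.eval x * x →
      (p.eval x - p.eval xs) * xs / (p.eval x * x)
        ≤ (d : ℝ) / (((d : ℝ) + 1) ^ (((d : ℝ) + 1) / (d : ℝ))) := by
  intro x xs hx0 hxs0 hden
  set C : ℝ := (d : ℝ) / (((d : ℝ) + 1) ^ (((d : ℝ) + 1) / (d : ℝ))) with hCdef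
  have hC0 : 0 ≤ C := by positivity
  by_cases hle : xs ≤ x
  · -- main case
    have hx : 0 < x := by
      rcases hx0.lt_or_eq with h | h
      · exact h
      · exfalso; rw [← h, mul_zero] at hden; exact lt_irrefl 0 hden
    rw [div_le_iff₀ hden]
    have hevx : p.eval x = ∑ k ∈ Finset.range (p.natDegree + 1), p.coeff k * x ^ k :=
      eval_eq_sum_range x
    have hevxs : p.eval xs = ∑ k ∈ Finset.range (p.natDegree + 1), p.coeff k * xs ^ k :=
      eval_eq_sum_range xs
    have hsum : (p.eval x - p.eval xs) * xs
        = ∑ k ∈ Finset.range (p.natDegree + 1), p.coeff k * ((x ^ k - xs ^ k) * xs) := by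
      rw [hevx, hevxs, ← Finset.sum_sub_distrib, Finset.sum_mul]
      congr 1; ext k; ring
    have hbound : ∀ k ∈ Finset.range (p.natDegree + 1),
        p.coeff k * ((x ^ k - xs ^ k) * xs) ≤ p.coeff k * (C * (x ^ k * x)) := by
      intro k hk
      apply mul_le_mul_of_nonneg_left _ (hcoeff k)
      exact mono_term d k hd (by
        have := Finset.mem_range.mp hk; omega) hx hxs0 hle
    calc (p.eval x - p.eval xs) * xs
        = ∑ k ∈ Finset.range (p.natDegree + 1), p.coeff k * ((x ^ k - xs ^ k) * xs) := hsum
      _ ≤ ∑ k ∈ Finset.range (p.natDegree + 1), p.coeff k * (C * (x ^ k * x)) :=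
          Finset.sum_le_sum hbound
      _ = C * (p.eval x * x) := by
          rw [hevx, Finset.sum_mul, Finset.mul_sum]
          congr 1; ext k; ring
  · push_neg at hle
    have : p.eval x < p.eval xs := hmono (Set.mem_Ici.mpr hx0) (Set.mem_Ici.mpr hxs0) hle
    have hnum : (p.eval x - p.eval xs) * xs ≤ 0 :=
      mul_nonpos_of_nonpos_of_nonneg (by linarith) hxs0
    exact le_trans (div_nonpos_of_nonpos_of_nonneg hnum hden.le) hC0
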